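/- Let F be a finite index set, V a finite set of Boolean variables, M ≥ 1 a natural number, and for each p ∈ F let C_p be a CNF formula over V having at least 1 and at most M clauses, and D_p a predicate on assignments σ : V → Bool such that σ satisfies C_p if and only if D_p σ holds. For an assignment σ let δ(σ) be the number of p ∈ F with D_p σ, and let SAT(σ) be the total number, summed over p ∈ F, of clauses of C_p made true by σ. Suppose ρ > 0 and α ≥ 1 are real numbers, the minimum over all assignments of δ is at least (M−1)·|F|/ρ, and σ* is an assignment with SAT(σ*) ≤ α · (minimum over all assignments of SAT). Then δ(σ*) ≤ α(1+ρ) · (minimum over all assignments of δ). -/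

import Mathlib

/-- A literal is a pair (variable, polarity); it is true under `σ` iff `σ`
maps the variable to the polarity.  A clause (list of literals) is made true
by `σ` iff some of its literals is true under `σ`. -/
def clauseTrue {V : Type} (σ : V → Bool) (cl : List (V × Bool)) : Bool :=
  cl.any fun l => σ l.1 == l.2

/-- Total number, over all indices `p`, of clauses of the CNF formula `C p`
made true by the assignment `σ`. -/
def satCount {F V : Type} [Fintype F] (C : F → List (List (V × Bool)))
    (σ : V → Bool) : ℕ :=
  ∑ p : F, (C p).countP (clauseTrue σ)

/-- Number of indices `p` such that the predicate `D p` holds of `σ`. -/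
noncomputable def dCount {F V : Type} [Fintype F] (D : F → (V → Bool) → Prop)
    (σ : V → Bool) : ℕ :=
  Nat.card {p : F // D p σ}

open Classical in
lemma dCount_eq' {F V : Type} [Fintype F] (D : F → (V → Bool) → Prop) (σ : V → Bool) :
    dCount D σ = ∑ p : F, (if D p σ then 1 else 0) := by
  rw [dCount, Nat.card_eq_fintype_card, Fintype.card_subtype, Finset.card_filter]

lemma key' {F V : Type} [Fintype F] (M : ℕ) (hM : 1 ≤ M)
    (C : F → List (List (V × Bool))) (D : F → (V → Bool) → Prop)
    (hlen : ∀ p, 1 ≤ (C p).length ∧ (C p).length ≤ M)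
    (hiff : ∀ p σ, (∀ cl ∈ C p, clauseTrue σ cl = true) ↔ D p σ)
    (σ : V → Bool) :
    dCount D σ ≤ satCount C σ ∧
      satCount C σ ≤ (M - 1) * Fintype.card F + dCount D σ := by
  classical
  rw [dCount_eq', satCount]
  constructor
  · apply Finset.sum_le_sum
    intro p _
    by_cases h : D p σ
    · simp only [h, if_true]
      have hall := (hiff p σ).mpr h
      have : (C p).countP (clauseTrue σ) = (C p).length :=
        List.countP_eq_length.mpr (by intro a ha; simpa using hall a ha)
      have := (hlen p).1
      omega
    · simp [h]
  · have : ∀ p ∈ Finset.univ, (C p).countP (clauseTrue σ)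
        ≤ (M - 1) + (if D p σ then 1 else 0) := by
      intro p _
      by_cases h : D p σ
      · have := List.countP_le_length (l := C p) (p := clauseTrue σ)
        have := (hlen p).2
        simp only [h, if_true]
        omega
      · obtain ⟨cl, hcl, hf⟩ : ∃ cl ∈ C p, ¬ clauseTrue σ cl = true := by
          by_contra hc
          push_neg at hc
          exact h ((hiff p σ).mp hc)
        have h1 : 0 < (C p).countP (fun c => !clauseTrue σ c) :=
          List.countP_pos_iff.mpr ⟨cl, hcl, by simp [hf]⟩
        have h2 : (C p).countP (clauseTrue σ) + (C p).countP (fun c => !clauseTrue σ c)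
            = (C p).length := by
          have := (List.length_eq_countP_add_countP (l := C p) (p := clauseTrue σ)).symm
          simpa using this
        have := (hlen p).2
        simp only [h, if_false]
        omega
    calc ∑ p : F, (C p).countP (clauseTrue σ)
        ≤ ∑ p : F, ((M - 1) + (if D p σ then 1 else 0)) := Finset.sum_le_sum this
      _ = (M - 1) * Fintype.card F + ∑ p : F, (if D p σ then 1 else 0) := by
          rw [Finset.sum_add_distrib, Finset.sum_const, Finset.card_univ, smul_eq_mul, mul_comm]

theorem approx_transfer_minMsat {F V : Type} [Fintype F] [Fintype V]
    (M : ℕ) (hM : 1 ≤ M)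
    (C : F → List (List (V × Bool))) (D : F → (V → Bool) → Prop)
    (hlen : ∀ p, 1 ≤ (C p).length ∧ (C p).length ≤ M)
    (hiff : ∀ p σ, (∀ cl ∈ C p, clauseTrue σ cl = true) ↔ D p σ)
    (ρ α : ℝ) (hρ : 0 < ρ) (hα : 1 ≤ α)
    (hmin : (((M - 1) * Fintype.card F : ℕ) : ℝ) / ρ ≤
      ((sInf (Set.range (dCount D)) : ℕ) : ℝ))
    (σstar : V → Bool)
    (happrox : (satCount C σstar : ℝ) ≤
      α * ((sInf (Set.range (satCount C)) : ℕ) : ℝ)) :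
    (dCount D σstar : ℝ) ≤
      α * (1 + ρ) * ((sInf (Set.range (dCount D)) : ℕ) : ℝ) := by
  set dmin := sInf (Set.range (dCount D)) with hd
  set smin := sInf (Set.range (satCount C)) with hs
  have hne : (Set.range (dCount D)).Nonempty := ⟨_, ⟨fun _ => true, rfl⟩⟩
  obtain ⟨σ0, hσ0⟩ : ∃ σ0, dCount D σ0 = dmin := Nat.sInf_mem hne
  have h1 : dCount D σstar ≤ satCount C σstar :=
    (key' M hM C D hlen hiff σstar).1
  have h2 : smin ≤ satCount C σ0 := Nat.sInf_le ⟨σ0, rfl⟩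
  have h3 : satCount C σ0 ≤ (M - 1) * Fintype.card F + dmin := by
    have := (key' M hM C D hlen hiff σ0).2
    omega
  have h4 : (((M - 1) * Fintype.card F : ℕ) : ℝ) ≤ ρ * dmin := by
    rw [div_le_iff₀ hρ] at hmin
    linarith [hmin]
  have h2' : (smin : ℝ) ≤ (((M - 1) * Fintype.card F : ℕ) : ℝ) + dmin := by
    have : (smin : ℝ) ≤ (((M - 1) * Fintype.card F + dmin : ℕ) : ℝ) := by
      exact_mod_cast le_trans h2 h3
    push_cast at this ⊢
    linarith
  have h1' : (dCount D σstar : ℝ) ≤ α * smin := le_trans (by exact_mod_cast h1) happrox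
  have hdpos : (0:ℝ) ≤ (dmin : ℝ) := Nat.cast_nonneg _
  nlinarith [mul_le_mul_of_nonneg_left h2' (le_trans zero_le_one hα),
    mul_le_mul_of_nonneg_left h4 (le_trans zero_le_one hα)]
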